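/- Let R1, R2 : ℝ^n × ℝ^n → ℝ^n be twice continuously differentiable parametric residual maps with a common point z* such that R1(z*,z*) = R2(z*,z*) = 0, R1(z,z) = R2(z,z) for all z, ∂R1/∂z₁(z,z) = ∂R2/∂z₁(z,z) for all z, and ∂R1/∂z₁(z*,z*) is invertible. Then the C¹ solution maps Π1, Π2 defined locally by R1(Π1(w), w) = 0 and R2(Π2(w), w) = 0 satisfy DΠ1(z*) = DΠ2(z*); in particular the spectral radii of DΠ1(z*) and DΠ2(z*) (the asymptotic linear contraction rates of the two fixed-point iterations) are equal. -/

import Mathlib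

/-- two parametric residual maps agreeing on the diagonal (in value
and in the partial derivative w.r.t. the unknown) have solution maps with equal
Jacobians at the common fixed point; in particular the spectral radii
(asymptotic linear contraction rates) coincide. -/
theorem stmt_5 (n : ℕ)
    (R1 R2 : (Fin n → ℝ) × (Fin n → ℝ) → (Fin n → ℝ)) (zs : Fin n → ℝ)
    (hR1 : ContDiff ℝ 2 R1) (hR2 : ContDiff ℝ 2 R2)
    (hzero : R1 (zs, zs) = 0)
    (hval : ∀ z : Fin n → ℝ, R1 (z, z) = R2 (z, z))
    (hdz1 : ∀ z : Fin n → ℝ,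
      fderiv ℝ (fun x => R1 (x, z)) z = fderiv ℝ (fun x => R2 (x, z)) z)
    (e : (Fin n → ℝ) ≃L[ℝ] (Fin n → ℝ))
    (he : (e : (Fin n → ℝ) →L[ℝ] (Fin n → ℝ)) = fderiv ℝ (fun z => R1 (z, zs)) zs) :
    ∀ U : Set (Fin n → ℝ), IsOpen U → zs ∈ U →
    ∀ Pi1 Pi2 : (Fin n → ℝ) → (Fin n → ℝ),
      ContDiffOn ℝ 1 Pi1 U → ContDiffOn ℝ 1 Pi2 U →
      Pi1 zs = zs → Pi2 zs = zs →
      (∀ w ∈ U, R1 (Pi1 w, w) = 0) → (∀ w ∈ U, R2 (Pi2 w, w) = 0) →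
      fderiv ℝ Pi1 zs = fderiv ℝ Pi2 zs ∧
      sSup ((‖·‖ : ℂ → ℝ) '' spectrum ℂ
          ((LinearMap.toMatrix' (fderiv ℝ Pi1 zs).toLinearMap).map (Complex.ofReal ·))) =
        sSup ((‖·‖ : ℂ → ℝ) '' spectrum ℂ
          ((LinearMap.toMatrix' (fderiv ℝ Pi2 zs).toLinearMap).map (Complex.ofReal ·))) := by

  intro U hU hzU Pi1 Pi2 hPi1 hPi2 hfix1 hfix2 hsol1 hsol2
  have hd1 : HasFDerivAt R1 (fderiv ℝ R1 (zs, zs)) (zs, zs) :=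
    ((hR1.differentiable (by norm_num)) (zs, zs)).hasFDerivAt
  have hd2 : HasFDerivAt R2 (fderiv ℝ R2 (zs, zs)) (zs, zs) :=
    ((hR2.differentiable (by norm_num)) (zs, zs)).hasFDerivAt
  set D1 := fderiv ℝ R1 (zs, zs) with hD1
  set D2 := fderiv ℝ R2 (zs, zs) with hD2
  have hmem : U ∈ nhds zs := hU.mem_nhds hzU
  have hP1 : HasFDerivAt Pi1 (fderiv ℝ Pi1 zs) zs :=
    ((hPi1.differentiableOn one_ne_zero).differentiableAt hmem).hasFDerivAt
  have hP2 : HasFDerivAt Pi2 (fderiv ℝ Pi2 zs) zs :=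
    ((hPi2.differentiableOn one_ne_zero).differentiableAt hmem).hasFDerivAt
  set P1 := fderiv ℝ Pi1 zs with hP1d
  set P2 := fderiv ℝ Pi2 zs with hP2d
  have hd1' : HasFDerivAt R1 D1 (Pi1 zs, zs) := by rw [hfix1]; exact hd1
  have hd2' : HasFDerivAt R2 D2 (Pi2 zs, zs) := by rw [hfix2]; exact hd2
  have hin1 : HasFDerivAt (fun w => (Pi1 w, w))
      (P1.prod (ContinuousLinearMap.id ℝ _)) zs := hP1.prodMk (hasFDerivAt_id zs)
  have hin2 : HasFDerivAt (fun w => (Pi2 w, w))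
      (P2.prod (ContinuousLinearMap.id ℝ _)) zs := hP2.prodMk (hasFDerivAt_id zs)
  have hc1 : HasFDerivAt (fun w => R1 (Pi1 w, w))
      (D1.comp (P1.prod (ContinuousLinearMap.id ℝ _))) zs :=
    HasFDerivAt.comp (f := fun w => (Pi1 w, w)) zs hd1' hin1
  have hc2 : HasFDerivAt (fun w => R2 (Pi2 w, w))
      (D2.comp (P2.prod (ContinuousLinearMap.id ℝ _))) zs :=
    HasFDerivAt.comp (f := fun w => (Pi2 w, w)) zs hd2' hin2
  have heq1 : (fun w => R1 (Pi1 w, w)) =ᶠ[nhds zs] fun _ => (0 : Fin n → ℝ) :=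
    Filter.eventuallyEq_of_mem hmem hsol1
  have heq2 : (fun w => R2 (Pi2 w, w)) =ᶠ[nhds zs] fun _ => (0 : Fin n → ℝ) :=
    Filter.eventuallyEq_of_mem hmem hsol2
  have key1 : D1.comp (P1.prod (ContinuousLinearMap.id ℝ _)) = 0 :=
    (hc1.congr_of_eventuallyEq heq1.symm).unique (hasFDerivAt_const _ _)
  have key2 : D2.comp (P2.prod (ContinuousLinearMap.id ℝ _)) = 0 :=
    (hc2.congr_of_eventuallyEq heq2.symm).unique (hasFDerivAt_const _ _)
  have hA1 : HasFDerivAt (fun x => R1 (x, zs))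
      (D1.comp (ContinuousLinearMap.inl ℝ _ _)) zs :=
    HasFDerivAt.comp (f := fun x => (x, zs)) zs hd1 (hasFDerivAt_prodMk_left zs zs)
  have hA2 : HasFDerivAt (fun x => R2 (x, zs))
      (D2.comp (ContinuousLinearMap.inl ℝ _ _)) zs :=
    HasFDerivAt.comp (f := fun x => (x, zs)) zs hd2 (hasFDerivAt_prodMk_left zs zs)
  have hinl : D1.comp (ContinuousLinearMap.inl ℝ _ _)
      = D2.comp (ContinuousLinearMap.inl ℝ _ _) := by
    have h := hdz1 zs
    rw [hA1.fderiv, hA2.fderiv] at h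
    exact h
  have hdiag1 : HasFDerivAt (fun z => R1 (z, z))
      (D1.comp ((ContinuousLinearMap.id ℝ _).prod (ContinuousLinearMap.id ℝ _))) zs :=
    HasFDerivAt.comp (f := fun z => (z, z)) zs hd1 ((hasFDerivAt_id zs).prodMk (hasFDerivAt_id zs))
  have hdiag2 : HasFDerivAt (fun z => R1 (z, z))
      (D2.comp ((ContinuousLinearMap.id ℝ _).prod (ContinuousLinearMap.id ℝ _))) zs := by
    have hfun : (fun z => R1 (z, z)) = fun z => R2 (z, z) := funext hval
    rw [hfun]
    exact HasFDerivAt.comp (f := fun z => (z, z)) zs hd2 ((hasFDerivAt_id zs).prodMk (hasFDerivAt_id zs))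
  have hdiagEq : D1.comp ((ContinuousLinearMap.id ℝ _).prod (ContinuousLinearMap.id ℝ _))
      = D2.comp ((ContinuousLinearMap.id ℝ _).prod (ContinuousLinearMap.id ℝ _)) :=
    hdiag1.unique hdiag2
  have he' : (e : (Fin n → ℝ) →L[ℝ] (Fin n → ℝ))
      = D1.comp (ContinuousLinearMap.inl ℝ _ _) := by rw [he, hA1.fderiv]
  have hmain : P1 = P2 := by
    refine ContinuousLinearMap.ext fun v => ?_
    apply e.injective
    have h1 : D1 (P1 v, v) = 0 := by
      have := congrArg (fun f => f v) key1
      simpa using this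
    have h2 : D2 (P2 v, v) = 0 := by
      have := congrArg (fun f => f v) key2
      simpa using this
    have hsplit1 : D1 (P1 v, v) = D1 (P1 v, 0) + D1 (0, v) := by
      rw [← map_add]; norm_num
    have hsplit2 : D2 (P2 v, v) = D2 (P2 v, 0) + D2 (0, v) := by
      rw [← map_add]; norm_num
    have hinlv : ∀ x, D1 (x, (0 : Fin n → ℝ)) = D2 (x, 0) := by
      intro x
      have := congrArg (fun f => f x) hinl
      simpa using this
    have hdv : D1 (v, v) = D2 (v, v) := by
      have := congrArg (fun f => f v) hdiagEq
      simpa using this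
    have hsd1 : D1 (v, v) = D1 (v, 0) + D1 (0, v) := by rw [← map_add]; norm_num
    have hsd2 : D2 (v, v) = D2 (v, 0) + D2 (0, v) := by rw [← map_add]; norm_num
    have hinr : D1 ((0 : Fin n → ℝ), v) = D2 (0, v) := by
      have h := hdv
      rw [hsd1, hsd2, hinlv v] at h
      exact add_left_cancel h
    have hev : ∀ x, e x = D1 (x, 0) := by
      intro x
      have : (e : (Fin n → ℝ) →L[ℝ] (Fin n → ℝ)) x
          = (D1.comp (ContinuousLinearMap.inl ℝ _ _)) x := by rw [he']
      simpa using this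
    rw [hev (P1 v), hev (P2 v), hinlv (P2 v)]
    have e1 : D1 (P1 v, 0) = - D1 (0, v) := by
      rw [hsplit1] at h1; exact eq_neg_of_add_eq_zero_left h1
    have e2 : D2 (P2 v, 0) = - D2 (0, v) := by
      rw [hsplit2] at h2; exact eq_neg_of_add_eq_zero_left h2
    rw [e1, e2, hinr]
  exact ⟨hmain, by rw [hmain]⟩
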